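/- Let (f, φ) be L-smad on a compact convex set P with strictly convex φ satisfying D_φ((1−γ)x+γv, x) ≤ γ^{1+ν}D_φ(v,x) for some ν ∈ (0,1], and let f be convex. Let D² := sup_{x,y∈P} D_φ(x,y). Consider Frank–Wolfe iterates x_{t+1} = (1−γ_t)x_t + γ_t v_t with v_t ∈ argmin_{v∈P}⟨∇f(x_t), v⟩ and γ_t = 2/(2+t). Then for all t ≥ 1, f(x_t) − f* ≤ 2^{1+ν} L D² / (t+2)^ν, where f* = min_{x∈P} f(x). -/

import Mathlib

open Set
open scoped RealInnerProductSpace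

noncomputable def bregman {n : ℕ} (φ : EuclideanSpace ℝ (Fin n) → ℝ)
    (φ' : EuclideanSpace ℝ (Fin n) → EuclideanSpace ℝ (Fin n))
    (x y : EuclideanSpace ℝ (Fin n)) : ℝ :=
  φ x - φ y - ⟪φ' y, x - y⟫

/-- Gradient inequality for a convex function on a convex set. -/
lemma grad_ineq_aux {n : ℕ} {P : Set (EuclideanSpace ℝ (Fin n))}
    {f : EuclideanSpace ℝ (Fin n) → ℝ} (hf : ConvexOn ℝ P f)
    {a b g : EuclideanSpace ℝ (Fin n)} (ha : a ∈ P) (hb : b ∈ P)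
    (hg : HasGradientAt f g a) : ⟪g, b - a⟫ ≤ f b - f a := by
  set c : ℝ → EuclideanSpace ℝ (Fin n) := fun t => a + t • (b - a) with hc
  have hcd : HasDerivAt c (b - a) 0 := by
    have h1 : HasDerivAt (fun t : ℝ => t • (b - a)) ((1 : ℝ) • (b - a)) 0 :=
      (hasDerivAt_id (0 : ℝ)).smul_const (b - a)
    simpa [c] using h1.const_add a
  have hfc : HasDerivAt (f ∘ c) ⟪g, b - a⟫ 0 := by
    have h1 : HasFDerivAt f (InnerProductSpace.toDual ℝ _ g) (c 0) := by
      simpa [c] using hg.hasFDerivAt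
    simpa [InnerProductSpace.toDual_apply_apply] using h1.comp_hasDerivAt 0 hcd
  have hT : Filter.Tendsto (slope (f ∘ c) 0) (nhdsWithin 0 (Ioi (0:ℝ)))
      (nhds ⟪g, b - a⟫) :=
    (hasDerivAt_iff_tendsto_slope.mp hfc).mono_left
      (nhdsWithin_mono _ fun t ht => ne_of_gt ht)
  refine le_of_tendsto hT ?_
  filter_upwards [Ioc_mem_nhdsGT_of_mem (by constructor <;> norm_num : (0:ℝ) ∈ Ico (0:ℝ) 1)]
    with t ht
  have ht0 : 0 < t := ht.1
  have hmem : c t = (1 - t) • a + t • b := by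
    simp only [c]; module
  have hcvx : f (c t) ≤ (1 - t) * f a + t * f b := by
    rw [hmem]
    exact hf.2 ha hb (by linarith [ht.2]) ht0.le (by ring)
  have hc0 : f (c 0) = f a := by simp [c]
  rw [slope_def_field]
  simp only [Function.comp_apply, sub_zero]
  rw [div_le_iff₀ ht0]
  nlinarith [hcvx, hc0]
theorem fw_open_loop_sublinear_convex {n : ℕ}
    (P : Set (EuclideanSpace ℝ (Fin n)))
    (hP : IsCompact P) (hPconv : Convex ℝ P) (hPne : P.Nonempty)
    (φ f : EuclideanSpace ℝ (Fin n) → ℝ)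
    (φ' f' : EuclideanSpace ℝ (Fin n) → EuclideanSpace ℝ (Fin n))
    (hφ : StrictConvexOn ℝ P φ)
    (hφ' : ∀ x ∈ P, HasGradientAt φ (φ' x) x)
    (hf' : ∀ x ∈ P, HasGradientAt f (f' x) x)
    (hf : ConvexOn ℝ P f)
    (L ν : ℝ) (hL : 0 < L) (hν : ν ∈ Ioc (0:ℝ) 1)
    (hsmad : ∀ a ∈ P, ∀ b ∈ P,
      |f a - f b - ⟪f' b, a - b⟫| ≤ L * bregman φ φ' a b)
    (hscale : ∀ a ∈ P, ∀ b ∈ P, ∀ γ ∈ Icc (0:ℝ) 1,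
      bregman φ φ' ((1 - γ) • a + γ • b) a ≤ γ ^ (1 + ν) * bregman φ φ' b a)
    (xstar : EuclideanSpace ℝ (Fin n)) (hxstar : xstar ∈ P)
    (hmin : IsMinOn f P xstar)
    (x v : ℕ → EuclideanSpace ℝ (Fin n))
    (hx0 : x 0 ∈ P)
    (hv : ∀ t : ℕ, v t ∈ P ∧ ∀ u ∈ P, ⟪f' (x t), v t⟫ ≤ ⟪f' (x t), u⟫)
    (hstep : ∀ t : ℕ,
      x (t + 1) = (1 - 2 / (2 + (t : ℝ))) • x t + (2 / (2 + (t : ℝ))) • v t) :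
    ∀ t : ℕ, 1 ≤ t →
      f (x t) - f xstar ≤
        2 ^ (1 + ν) * L * sSup {d : ℝ | ∃ a ∈ P, ∃ b ∈ P, d = bregman φ φ' a b} /
          ((t : ℝ) + 2) ^ ν := by
  obtain ⟨hν0, hν1⟩ := hν
  have h1ν : (1 : ℝ) + ν ≠ 0 := by linarith
  -- continuity and boundedness of φ on P
  have hφcont : ContinuousOn φ P := fun p hp =>
    ((hφ' p hp).hasFDerivAt.differentiableAt.continuousAt).continuousWithinAt
  obtain ⟨C, hC⟩ := hP.exists_bound_of_continuousOn hφcont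
  have hCabs : ∀ p ∈ P, |φ p| ≤ C := by
    intro p hp; simpa [Real.norm_eq_abs] using hC p hp
  -- the Bregman distance is uniformly bounded on P × P
  have hhalf : ((1:ℝ)/2) ^ (1 + ν) * 2 = ((1:ℝ)/2) ^ ν := by
    rw [Real.rpow_one_add' (by norm_num) h1ν]; ring
  have hpow_lt : ((1:ℝ)/2) ^ ν < 1 := Real.rpow_lt_one (by norm_num) (by norm_num) hν0
  have hB : ∀ p ∈ P, ∀ q ∈ P, bregman φ φ' p q ≤ 4 * C / (1 - ((1:ℝ)/2) ^ ν) := by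
    intro p hp q hq
    have hm : (1 - (1:ℝ)/2) • q + ((1:ℝ)/2) • p ∈ P :=
      hPconv hq hp (by norm_num) (by norm_num) (by norm_num)
    have hs := hscale q hq p hp ((1:ℝ)/2) ⟨by norm_num, by norm_num⟩
    have hiexp : bregman φ φ' ((1 - (1:ℝ)/2) • q + ((1:ℝ)/2) • p) q
        = φ ((1 - (1:ℝ)/2) • q + ((1:ℝ)/2) • p) - φ q - (1/2) * ⟪φ' q, p - q⟫ := by
      unfold bregman
      have hsub : (1 - (1:ℝ)/2) • q + ((1:ℝ)/2) • p - q = ((1:ℝ)/2) • (p - q) := by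
        module
      rw [hsub, real_inner_smul_right]
    have hbdef : bregman φ φ' p q = φ p - φ q - ⟪φ' q, p - q⟫ := rfl
    have e1 : ((1:ℝ)/2) ^ (1 + ν) * bregman φ φ' p q
        = (((1:ℝ)/2) ^ ν * bregman φ φ' p q) / 2 := by
      linear_combination (bregman φ φ' p q / 2) * hhalf
    rw [e1, hiexp] at hs
    rw [le_div_iff₀ (by linarith)]
    have hp1 := hCabs p hp
    have hq1 := hCabs q hq
    have hm1 := hCabs _ hm
    rw [abs_le] at hp1 hq1 hm1
    nlinarith [hs, hbdef, hp1.1, hp1.2, hq1.1, hq1.2, hm1.1, hm1.2]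
  set S : Set ℝ := {d : ℝ | ∃ a ∈ P, ∃ b ∈ P, d = bregman φ φ' a b} with hS
  have hSbdd : BddAbove S := by
    refine ⟨4 * C / (1 - ((1:ℝ)/2) ^ ν), ?_⟩
    rintro d ⟨a, ha, b, hb, rfl⟩
    exact hB a ha b hb
  set Dsq : ℝ := sSup S with hDsq
  have hDle : ∀ p ∈ P, ∀ q ∈ P, bregman φ φ' p q ≤ Dsq := fun p hp q hq =>
    le_csSup hSbdd ⟨p, hp, q, hq, rfl⟩
  obtain ⟨a0, ha0⟩ := hPne
  have hD0 : 0 ≤ Dsq := by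
    refine le_csSup hSbdd ⟨a0, ha0, a0, ha0, ?_⟩
    simp [bregman]
  -- step sizes and membership of iterates
  have hγmem : ∀ t : ℕ, 2 / (2 + (t:ℝ)) ∈ Icc (0:ℝ) 1 := by
    intro t
    have h2 : (0:ℝ) < 2 + (t:ℝ) := by positivity
    refine ⟨by positivity, ?_⟩
    rw [div_le_one h2]
    have h3 : (0:ℝ) ≤ (t:ℝ) := Nat.cast_nonneg t
    linarith
  have hxP : ∀ t, x t ∈ P := by
    intro t
    induction t with
    | zero => exact hx0
    | succ k ih =>
      rw [hstep k]
      exact hPconv ih (hv k).1 (by linarith [(hγmem k).2]) (hγmem k).1 (by ring)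
  -- the basic recursion
  have hrec : ∀ t : ℕ, f (x (t+1)) - f xstar ≤
      (1 - 2/(2+(t:ℝ))) * (f (x t) - f xstar)
        + L * Dsq * (2/(2+(t:ℝ))) ^ (1 + ν) := by
    intro t
    set γ : ℝ := 2 / (2 + (t:ℝ)) with hγ
    have hγm := hγmem t
    rw [← hγ] at hγm
    have hxt := hxP t
    have hx1 := hxP (t+1)
    have hvt := (hv t).1
    have hst := hstep t
    rw [← hγ] at hst
    have habs : f (x (t+1)) - f (x t) - ⟪f' (x t), x (t+1) - x t⟫
        ≤ L * bregman φ φ' (x (t+1)) (x t) :=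
      le_of_abs_le (hsmad (x (t+1)) hx1 (x t) hxt)
    have hbr : bregman φ φ' (x (t+1)) (x t) ≤ γ ^ (1 + ν) * Dsq := by
      have h1 := hscale (x t) hxt (v t) hvt γ hγm
      rw [← hst] at h1
      refine h1.trans ?_
      exact mul_le_mul_of_nonneg_left (hDle (v t) hvt (x t) hxt)
        (Real.rpow_nonneg hγm.1 _)
    have hdir : ⟪f' (x t), x (t+1) - x t⟫ = γ * ⟪f' (x t), v t - x t⟫ := by
      have hd : x (t+1) - x t = γ • (v t - x t) := by rw [hst]; module
      rw [hd, real_inner_smul_right]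
    have hlin : ⟪f' (x t), v t - x t⟫ ≤ f xstar - f (x t) := by
      have h1 := (hv t).2 xstar hxstar
      have h2 : ⟪f' (x t), xstar - x t⟫ ≤ f xstar - f (x t) :=
        grad_ineq_aux hf hxt hxstar (hf' (x t) hxt)
      rw [inner_sub_right] at h2 ⊢
      linarith
    have hmul : γ * ⟪f' (x t), v t - x t⟫ ≤ γ * (f xstar - f (x t)) :=
      mul_le_mul_of_nonneg_left hlin hγm.1
    have hLbr : L * bregman φ φ' (x (t+1)) (x t) ≤ L * (γ ^ (1 + ν) * Dsq) :=
      mul_le_mul_of_nonneg_left hbr hL.le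
    rw [hdir] at habs
    nlinarith [habs, hmul, hLbr]
  -- main induction
  have hA0 : 0 ≤ 2 ^ (1 + ν) * L * Dsq := by
    have := Real.rpow_nonneg (by norm_num : (0:ℝ) ≤ 2) (1 + ν)
    positivity
  intro t
  induction t with
  | zero => intro h; exact absurd h (by norm_num)
  | succ k ih =>
    intro _
    rcases Nat.eq_zero_or_pos k with hk | hk
    · subst hk
      have h0 := hrec 0
      norm_num [Real.one_rpow] at h0
      have h3 : (0:ℝ) < (3:ℝ) ^ ν := Real.rpow_pos_of_pos (by norm_num) _
      have hgoal : L * Dsq * (3:ℝ) ^ ν ≤ 2 ^ (1 + ν) * L * Dsq := by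
        have e3 : (3:ℝ) ^ ν = 2 ^ ν * (3/2) ^ ν := by
          rw [← Real.mul_rpow (by norm_num) (by norm_num)]; norm_num
        have e2 : (2:ℝ) ^ (1 + ν) = 2 * 2 ^ ν := Real.rpow_one_add' (by norm_num) h1ν
        have h32 : ((3:ℝ)/2) ^ ν ≤ 3/2 := by
          calc ((3:ℝ)/2) ^ ν ≤ ((3:ℝ)/2) ^ (1:ℝ) :=
                Real.rpow_le_rpow_of_exponent_le (by norm_num) hν1
            _ = 3/2 := Real.rpow_one _
        have h2ν : (0:ℝ) < (2:ℝ) ^ ν := Real.rpow_pos_of_pos (by norm_num) _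
        have hLD : 0 ≤ L * Dsq := mul_nonneg hL.le hD0
        have hkey : (L * Dsq * 2 ^ ν) * ((3:ℝ)/2) ^ ν ≤ (L * Dsq * 2 ^ ν) * (3/2) :=
          mul_le_mul_of_nonneg_left h32 (mul_nonneg hLD h2ν.le)
        rw [e3, e2]
        nlinarith [hkey, mul_nonneg hLD h2ν.le]
      show f (x 1) - f xstar ≤ 2 ^ (1 + ν) * L * Dsq / (((1:ℕ):ℝ) + 2) ^ ν
      have hc : (((1:ℕ):ℝ) + 2) = 3 := by norm_num
      rw [hc, le_div_iff₀ h3]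
      calc (f (x 1) - f xstar) * 3 ^ ν ≤ (L * Dsq) * 3 ^ ν := by
            apply mul_le_mul_of_nonneg_right _ h3.le
            linarith [h0]
        _ ≤ 2 ^ (1 + ν) * L * Dsq := by linarith [hgoal]
    · have hk1 : 1 ≤ k := hk
      have ihk := ih hk1
      set τ : ℝ := (k:ℝ) with hτ
      have hτ0 : (0:ℝ) ≤ τ := Nat.cast_nonneg k
      have hd : (0:ℝ) < τ + 2 := by linarith
      have hdν : (0:ℝ) < (τ + 2) ^ ν := Real.rpow_pos_of_pos hd _
      have hAd : (0:ℝ) < (τ+2) * (τ+2) ^ ν := by positivity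
      have h3ν : (0:ℝ) < (τ + 3) ^ ν := Real.rpow_pos_of_pos (by linarith) _
      have h0 := hrec k
      -- Bernoulli-type bound
      have hb1 : (1 + 1/(τ+2)) ^ ν ≤ 1 + 1/(τ+2) := by
        have hb0 : (1 + 1/(τ+2)) ^ ν ≤ 1 + ν * (1/(τ+2)) :=
          rpow_one_add_le_one_add_mul_self (by linarith [div_nonneg zero_le_one hd.le] : (-1:ℝ) ≤ 1/(τ+2)) hν0.le hν1
        have : ν * (1/(τ+2)) ≤ 1 * (1/(τ+2)) :=
          mul_le_mul_of_nonneg_right hν1 (by positivity)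
        linarith
      have e4 : (τ + 3) ^ ν = (τ+2) ^ ν * (1 + 1/(τ+2)) ^ ν := by
        rw [← Real.mul_rpow hd.le (by positivity)]
        congr 1
        field_simp
        ring
      have h5 : (τ+1) * (τ+3) ^ ν ≤ (τ+2) * (τ+2) ^ ν := by
        rw [e4]
        have h7 : (τ+1) * (1 + 1/(τ+2)) ≤ τ+2 := by
          have h8 : (τ+1)/(τ+2) ≤ 1 := by rw [div_le_one hd]; linarith
          have h9 : (τ+1) * (1 + 1/(τ+2)) = (τ+1) + (τ+1)/(τ+2) := by ring
          linarith
        calc (τ+1) * ((τ+2) ^ ν * (1 + 1/(τ+2)) ^ ν)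
            ≤ (τ+1) * ((τ+2) ^ ν * (1 + 1/(τ+2))) := by
              apply mul_le_mul_of_nonneg_left _ (by linarith)
              exact mul_le_mul_of_nonneg_left hb1 hdν.le
          _ = (τ+2) ^ ν * ((τ+1) * (1 + 1/(τ+2))) := by ring
          _ ≤ (τ+2) ^ ν * (τ+2) := mul_le_mul_of_nonneg_left h7 hdν.le
          _ = (τ+2) * (τ+2) ^ ν := by ring
      -- rewrite the recursion bound
      have e5 : (2/(τ+2)) ^ (1+ν) = 2 ^ (1+ν) / ((τ+2) * (τ+2) ^ ν) := by
        rw [Real.div_rpow (by norm_num) hd.le, Real.rpow_one_add' hd.le h1ν]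
      have e7 : 1 - 2/(τ+2) = τ/(τ+2) := by field_simp; ring
      have hstep1 : f (x (k+1)) - f xstar
          ≤ 2 ^ (1+ν) * L * Dsq * (τ+1) / ((τ+2) * (τ+2) ^ ν) := by
        have hτd : (0:ℝ) ≤ τ/(τ+2) := by positivity
        have hm1 : (τ/(τ+2)) * (f (x k) - f xstar)
            ≤ (τ/(τ+2)) * (2 ^ (1 + ν) * L * Dsq / (τ + 2) ^ ν) :=
          mul_le_mul_of_nonneg_left ihk hτd
        have e8 : (τ/(τ+2)) * (2 ^ (1 + ν) * L * Dsq / (τ + 2) ^ ν)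
            + L * Dsq * (2 ^ (1+ν) / ((τ+2) * (τ+2) ^ ν))
            = 2 ^ (1+ν) * L * Dsq * (τ+1) / ((τ+2) * (τ+2) ^ ν) := by
          simp only [← div_div]
          ring
        rw [show (2:ℝ) + (k:ℝ) = τ + 2 from by rw [hτ]; ring, e7, e5] at h0
        linarith [h0, hm1, e8]
      refine hstep1.trans ?_
      show 2 ^ (1+ν) * L * Dsq * (τ+1) / ((τ+2) * (τ+2) ^ ν)
          ≤ 2 ^ (1 + ν) * L * Dsq / (((k+1:ℕ):ℝ) + 2) ^ ν
      have hc : (((k+1:ℕ):ℝ) + 2) = τ + 3 := by push_cast; ring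
      rw [hc, div_le_div_iff₀ hAd h3ν]
      calc 2 ^ (1+ν) * L * Dsq * (τ+1) * (τ+3) ^ ν
          = (2 ^ (1+ν) * L * Dsq) * ((τ+1) * (τ+3) ^ ν) := by ring
        _ ≤ (2 ^ (1+ν) * L * Dsq) * ((τ+2) * (τ+2) ^ ν) :=
            mul_le_mul_of_nonneg_left h5 hA0
        _ = 2 ^ (1+ν) * L * Dsq * ((τ+2) * (τ+2) ^ ν) := by ring
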